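/- Let K = F_{2^m}, let σ(x) = x^{2^k} with gcd(k,m) = 1, and let σ̄(x) = x^{2^{m−k}} be the inverse automorphism. Let α ∈ K be such that X^{σ+1} + X + α has no root in K. Then F_{α,σ} and F_{α^{σ̄},σ̄} are linear equivalent, where α^{σ̄} = α^{2^{m−k}}. -/

import Mathlib

/-- `f_{α,σ}(x,y) = x^(σ+1) + x y^σ + α y^(σ+1)`, where `σ : x ↦ x^(2^k)`. -/
noncomputable def fpoly {m : ℕ} (k : ℕ) (α x y : GaloisField 2 m) : GaloisField 2 m :=
  x ^ (2 ^ k + 1) + x * y ^ (2 ^ k) + α * y ^ (2 ^ k + 1)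

/-- `g_{α,σ}(x,y) = x^(σ²+1) + α x^(σ²) y + (1+α^σ) x y^(σ²) + α y^(σ²+1)`. -/
noncomputable def gpoly {m : ℕ} (k : ℕ) (α x y : GaloisField 2 m) : GaloisField 2 m :=
  x ^ (2 ^ (2 * k) + 1) + α * x ^ (2 ^ (2 * k)) * y
    + (1 + α ^ (2 ^ k)) * x * y ^ (2 ^ (2 * k)) + α * y ^ (2 ^ (2 * k) + 1)

/-- The APN function `F_{α,σ} = (f_{α,σ}, g_{α,σ}) : K² → K²`. -/
noncomputable def Fbiproj {m : ℕ} (k : ℕ) (α : GaloisField 2 m)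
    (p : GaloisField 2 m × GaloisField 2 m) : GaloisField 2 m × GaloisField 2 m :=
  (fpoly k α p.1 p.2, gpoly k α p.1 p.2)

/-- `F` and `G` are linear equivalent if `L₁ ∘ F ∘ L₂ = G` for some
`𝔽₂`-linear bijections `L₁, L₂`. -/
def LinearEquivalent {V : Type*} [AddCommGroup V] [Module (ZMod 2) V]
    (F G : V → V) : Prop :=
  ∃ L₁ L₂ : V ≃ₗ[ZMod 2] V, ∀ z : V, L₁ (F (L₂ z)) = G z

/-- A ring equivalence of `GaloisField 2 m` is automatically `ZMod 2`-linear. -/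
noncomputable def ringEquivToLin {m : ℕ} (e : GaloisField 2 m ≃+* GaloisField 2 m) :
    GaloisField 2 m ≃ₗ[ZMod 2] GaloisField 2 m :=
  { e with
    map_add' := e.map_add
    map_smul' := by
      intro c x
      fin_cases c
      · show e ((0 : ZMod 2) • x) = (0 : ZMod 2) • e x
        simp
      · show e ((1 : ZMod 2) • x) = (1 : ZMod 2) • e x
        simp }

@[simp] lemma ringEquivToLin_apply {m : ℕ} (e : GaloisField 2 m ≃+* GaloisField 2 m)
    (x : GaloisField 2 m) : ringEquivToLin e x = e x := rfl

/-- The shear `(x, y) ↦ (x + y, y)` on `K × K`, an involution in characteristic two. -/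
noncomputable def shear (m : ℕ) :
    (GaloisField 2 m × GaloisField 2 m) ≃ₗ[ZMod 2] (GaloisField 2 m × GaloisField 2 m) where
  toFun p := (p.1 + p.2, p.2)
  invFun p := (p.1 + p.2, p.2)
  left_inv p := by
    have h2 : (2 : GaloisField 2 m) = 0 := by exact_mod_cast CharP.cast_eq_zero (GaloisField 2 m) 2
    ext
    · simp; linear_combination p.2 * h2
    · simp
  right_inv p := by
    have h2 : (2 : GaloisField 2 m) = 0 := by exact_mod_cast CharP.cast_eq_zero (GaloisField 2 m) 2
    ext
    · simp; linear_combination p.2 * h2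
    · simp
  map_add' p q := by
    ext
    · simp; ring
    · simp
  map_smul' c p := by
    ext
    · simp [smul_add]
    · simp

lemma pow_card_gf (m : ℕ) (hm : m ≠ 0) (x : GaloisField 2 m) : x ^ (2:ℕ) ^ m = x := by
  have : Fintype (GaloisField 2 m) := Fintype.ofFinite _
  have h := FiniteField.pow_card x
  rwa [← Nat.card_eq_fintype_card, GaloisField.card 2 m hm] at h

lemma key_f (m k : ℕ) (hkm' : k < m) (α x y : GaloisField 2 m)
    (hcard : ∀ u : GaloisField 2 m, u ^ (2:ℕ) ^ m = u)
    (h2 : (2 : GaloisField 2 m) = 0) :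
    (fpoly k α (x + y) y) ^ (2:ℕ) ^ (m - k) = fpoly (m - k) (α ^ 2 ^ (m - k)) x y := by
  unfold fpoly
  have hmul : (2:ℕ) ^ k * 2 ^ (m - k) = 2 ^ m := by
    rw [← pow_add]; congr 1; omega
  simp only [pow_succ, add_pow_char_pow, mul_pow, ← pow_mul, hmul, hcard]
  linear_combination (x ^ 2 ^ (m - k) * y + y ^ 2 ^ (m - k) * y) * h2

lemma key_g (m k : ℕ) (hkm' : k < m) (α x y : GaloisField 2 m)
    (hcard : ∀ u : GaloisField 2 m, u ^ (2:ℕ) ^ m = u)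
    (h2 : (2 : GaloisField 2 m) = 0) :
    (gpoly k α (x + y) y) ^ (2:ℕ) ^ (2 * (m - k)) = gpoly (m - k) (α ^ 2 ^ (m - k)) x y := by
  unfold gpoly
  have h1 : ∀ u : GaloisField 2 m, u ^ ((2:ℕ) ^ (2 * k) * 2 ^ (2 * (m - k))) = u := by
    intro u
    rw [show (2:ℕ) ^ (2 * k) * 2 ^ (2 * (m - k)) = 2 ^ m * 2 ^ m by
      rw [← pow_add, ← pow_add]; congr 1; omega, pow_mul, hcard, hcard]
  have h2a : ∀ u : GaloisField 2 m,
      u ^ ((2:ℕ) ^ k * 2 ^ (2 * (m - k))) = u ^ (2:ℕ) ^ (m - k) := by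
    intro u
    rw [show (2:ℕ) ^ k * 2 ^ (2 * (m - k)) = 2 ^ (m - k) * 2 ^ m by
      rw [← pow_add, ← pow_add]; congr 1; omega, pow_mul, hcard]
  have hB : ∀ u : GaloisField 2 m,
      u ^ (2:ℕ) ^ (2 * (m - k)) = u ^ ((2:ℕ) ^ (m - k) * 2 ^ (m - k)) := by
    intro u
    rw [← pow_add, ← two_mul]
  simp only [pow_succ, add_pow_char_pow, mul_pow, one_pow]
  simp only [← pow_mul]
  simp only [h1, h2a]
  simp only [hB]
  linear_combination (x ^ ((2:ℕ) ^ (m - k) * 2 ^ (m - k)) + y ^ ((2:ℕ) ^ (m - k) * 2 ^ (m - k))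
    + α ^ ((2:ℕ) ^ (m - k) * 2 ^ (m - k)) * y ^ ((2:ℕ) ^ (m - k) * 2 ^ (m - k))) * y * h2

/-- With `σ̄ : x ↦ x^(2^(m-k))` the inverse automorphism of `σ : x ↦ x^(2^k)`,
the functions `F_{α,σ}` and `F_{α^σ̄, σ̄}` are linear equivalent. -/
theorem stmt_10 (m k : ℕ) (hk : 0 < k) (hkm' : k < m) (hkm : Nat.gcd k m = 1)
    (α : GaloisField 2 m)
    (hα : ∀ x : GaloisField 2 m, x ^ (2 ^ k + 1) + x + α ≠ 0) :
    LinearEquivalent (Fbiproj k α) (Fbiproj (m - k) (α ^ (2 ^ (m - k)))) := by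
  have hm : m ≠ 0 := by omega
  have hcard := pow_card_gf m hm
  have h2 : (2 : GaloisField 2 m) = 0 := by
    exact_mod_cast CharP.cast_eq_zero (GaloisField 2 m) 2
  refine ⟨LinearEquiv.prodCongr
      (ringEquivToLin (iterateFrobeniusEquiv (GaloisField 2 m) 2 (m - k)))
      (ringEquivToLin (iterateFrobeniusEquiv (GaloisField 2 m) 2 (2 * (m - k)))),
    shear m, fun z => ?_⟩
  obtain ⟨x, y⟩ := z
  have hshear : (shear m) (x, y) = (x + y, y) := rfl
  rw [hshear]
  show ((iterateFrobeniusEquiv (GaloisField 2 m) 2 (m - k)) (fpoly k α (x + y) y),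
        (iterateFrobeniusEquiv (GaloisField 2 m) 2 (2 * (m - k))) (gpoly k α (x + y) y))
      = Fbiproj (m - k) (α ^ 2 ^ (m - k)) (x, y)
  rw [iterateFrobeniusEquiv_def, iterateFrobeniusEquiv_def]
  exact Prod.ext (key_f m k hkm' α x y hcard h2) (key_g m k hkm' α x y hcard h2)
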